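/- Let Γ be a basic game that has a strictly convex potential in each state, and let μ be a Bayes correlated Wardrop equilibrium of Γ with finite support such that every flow profile in the support of every μ(·|θ) has rational coordinates. Then there exists a direct information structure I such that the obedient interim flow profile of I is a Bayesian Wardrop equilibrium of (Γ, I), its obedient outcome μ̆_I equals μ, and μ̆_I is the unique Bayesian Wardrop equilibrium outcome of (Γ, I). -/

import Mathlib

noncomputable section

namespace NonatomicGames

/-- An information structure: finitely many populations with sizes summing to one,
a finite type set per population, and a signal distribution `π θ` for each state. -/
structure InfoStructure (Θ : Type) where
  K : Type
  [instFintypeK : Fintype K]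
  [instDecEqK : DecidableEq K]
  T : K → Type
  [instFintypeT : ∀ k, Fintype (T k)]
  [instDecEqT : ∀ k, DecidableEq (T k)]
  γ : K → ℝ
  γ_pos : ∀ k, 0 < γ k
  γ_sum : ∑ k, γ k = 1
  π : Θ → (∀ k, T k) → ℝ
  π_nonneg : ∀ θ τ, 0 ≤ π θ τ
  π_sum : ∀ θ, ∑ τ, π θ τ = 1

attribute [instance] InfoStructure.instFintypeK InfoStructure.instDecEqK
  InfoStructure.instFintypeT InfoStructure.instDecEqT

/-- A direct information structure: the type set of each population is the action set `A`. -/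
structure DirectInfoStructure (A Θ : Type) [Fintype A] [DecidableEq A] where
  K : Type
  [instFintypeK : Fintype K]
  [instDecEqK : DecidableEq K]
  γ : K → ℝ
  γ_pos : ∀ k, 0 < γ k
  γ_sum : ∑ k, γ k = 1
  π : Θ → (K → A) → ℝ
  π_nonneg : ∀ θ τ, 0 ≤ π θ τ
  π_sum : ∀ θ, ∑ τ, π θ τ = 1

attribute [instance] DirectInfoStructure.instFintypeK DirectInfoStructure.instDecEqK

open MeasureTheory Finset

variable {A Θ : Type} [Fintype A] [DecidableEq A] [Fintype Θ]

/-- The information structure associated with a direct information structure. -/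
def DirectInfoStructure.toInfo (I : DirectInfoStructure A Θ) : InfoStructure Θ where
  K := I.K
  instFintypeK := I.instFintypeK
  instDecEqK := I.instDecEqK
  T := fun _ => A
  instFintypeT := fun _ => inferInstanceAs (Fintype A)
  instDecEqT := fun _ => inferInstanceAs (DecidableEq A)
  γ := I.γ
  γ_pos := I.γ_pos
  γ_sum := I.γ_sum
  π := I.π
  π_nonneg := I.π_nonneg
  π_sum := I.π_sum

/-- The obedient interim flow profile of a direct information structure:
population `k` receiving recommendation `t` puts all its mass `γ k` on action `t`. -/
def DirectInfoStructure.obedient (I : DirectInfoStructure A Θ) :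
    ∀ _k : I.K, A → A → ℝ :=
  fun k t a => if t = a then I.γ k else 0

/-- `yhat` is an interim flow profile: nonnegative flows summing to the population sizes. -/
def IsInterim (I : InfoStructure Θ) (yhat : ∀ k, I.T k → A → ℝ) : Prop :=
  (∀ k t a, 0 ≤ yhat k t a) ∧ ∀ k t, ∑ a, yhat k t a = I.γ k

/-- The interim total flow profile given the type profile `τ`. -/
def totalFlow (I : InfoStructure Θ) (yhat : ∀ k, I.T k → A → ℝ) (τ : ∀ k, I.T k) :
    A → ℝ :=
  fun a => ∑ k, yhat k (τ k) a

/-- The total probability `P(τᵏ)` of type `tk` for population `k`. -/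
def typeProb (I : InfoStructure Θ) (p : Θ → ℝ) (k : I.K) (tk : I.T k) : ℝ :=
  ∑ θ, ∑ τ : ∀ j, I.T j, if τ k = tk then p θ * I.π θ τ else 0

/-- Bayesian Wardrop ε-equilibrium of the basic game `(p, c)` extended with `I`. -/
def IsBWEps (I : InfoStructure Θ) (p : Θ → ℝ) (c : A → (A → ℝ) → Θ → ℝ) (ε : ℝ)
    (yhat : ∀ k, I.T k → A → ℝ) : Prop :=
  IsInterim I yhat ∧
  ∀ (k : I.K) (tk : I.T k), 0 < typeProb I p k tk →
    ∀ a b : A, 0 < yhat k tk a →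
      (∑ θ, ∑ τ : ∀ j, I.T j,
        if τ k = tk then
          p θ * I.π θ τ * (c a (totalFlow I yhat τ) θ - c b (totalFlow I yhat τ) θ)
        else 0)
      ≤ ε * typeProb I p k tk

/-- The outcome (state-dependent distribution over flow profiles) induced by `yhat`. -/
def outcomeMeasure (I : InfoStructure Θ) (yhat : ∀ k, I.T k → A → ℝ) (θ : Θ) :
    Measure (A → ℝ) :=
  ∑ τ : ∀ k, I.T k, ENNReal.ofReal (I.π θ τ) • Measure.dirac (totalFlow I yhat τ)

/-- The probability that the induced outcome puts on the flow profile `z` in state `θ`. -/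
def outcomeWeight (I : InfoStructure Θ) (yhat : ∀ k, I.T k → A → ℝ) (θ : Θ)
    (z : A → ℝ) : ℝ :=
  ∑ τ : ∀ k, I.T k, if totalFlow I yhat τ = z then I.π θ τ else 0

/-- The auxiliary (non-normalized interim) cost `C_a^{k,τᵏ}(yhat)`. -/
def auxCost (I : InfoStructure Θ) (p : Θ → ℝ) (c : A → (A → ℝ) → Θ → ℝ)
    (yhat : ∀ k, I.T k → A → ℝ) (k : I.K) (tk : I.T k) (a : A) : ℝ :=
  ∑ θ, ∑ τ : ∀ j, I.T j,
    if τ k = tk then p θ * I.π θ τ * c a (totalFlow I yhat τ) θ else 0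

/-- The potential `Φ_π` of the auxiliary multi-population game. -/
def potPi (I : InfoStructure Θ) (p : Θ → ℝ) (Φ : Θ → (A → ℝ) → ℝ)
    (yhat : ∀ k, I.T k → A → ℝ) : ℝ :=
  ∑ θ, ∑ τ : ∀ k, I.T k, p θ * I.π θ τ * Φ θ (totalFlow I yhat τ)

/-- The social cost `SC(y, θ) = Σ_a y_a c_a(y, θ)`. -/
def socialCost (c : A → (A → ℝ) → Θ → ℝ) (y : A → ℝ) (θ : Θ) : ℝ :=
  ∑ a, y a * c a y θ

/-- The total cost `TC(yhat)`. -/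
def totalCost (I : InfoStructure Θ) (p : Θ → ℝ) (c : A → (A → ℝ) → Θ → ℝ)
    (yhat : ∀ k, I.T k → A → ℝ) : ℝ :=
  ∑ k, ∑ tk : I.T k, ∑ a, yhat k tk a * auxCost I p c yhat k tk a

/-- An outcome: a state-dependent Borel probability measure supported on the simplex `Y`. -/
def IsOutcome (μ : Θ → Measure (A → ℝ)) : Prop :=
  (∀ θ, IsProbabilityMeasure (μ θ)) ∧ ∀ θ, μ θ (stdSimplex ℝ A)ᶜ = 0

/-- Bayes correlated Wardrop equilibrium of the basic game `(p, c)`. -/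
def IsBCWE (p : Θ → ℝ) (c : A → (A → ℝ) → Θ → ℝ) (μ : Θ → Measure (A → ℝ)) : Prop :=
  IsOutcome μ ∧
  ∀ a b : A,
    ∑ θ, p θ * ∫ y, y a * c a y θ ∂(μ θ) ≤ ∑ θ, p θ * ∫ y, y a * c b y θ ∂(μ θ)

/-- `Φ` is a (state-by-state) potential for the cost profile `c`: for each state it is
continuously differentiable on an open neighborhood of the simplex and its partial
derivative in the direction of each action `a` is the cost of `a`. -/
def IsPotential (c : A → (A → ℝ) → Θ → ℝ) (Φ : Θ → (A → ℝ) → ℝ) : Prop :=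
  ∀ θ, ∃ U : Set (A → ℝ), IsOpen U ∧ stdSimplex ℝ A ⊆ U ∧
    ContDiffOn ℝ 1 (Φ θ) U ∧
    ∀ y ∈ stdSimplex ℝ A, ∀ a, fderiv ℝ (Φ θ) y (Pi.single a 1) = c a y θ


/-! ### Auxiliary lemmas -/

section AuxMeasure

variable {α : Type*} [MeasurableSpace α] [MeasurableSingletonClass α]

lemma measure_eq_sum_dirac (ν : Measure α) (s : Finset α) (hs : ν (↑s)ᶜ = 0) :
    ν = ∑ z ∈ s, ν {z} • Measure.dirac z := by
  ext E hE
  have h1 : ν E = ν (E ∩ ↑s) := by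
    refine le_antisymm ?_ (measure_mono Set.inter_subset_left)
    calc ν E ≤ ν (E ∩ ↑s) + ν (E \ ↑s) := measure_le_inter_add_diff ν E ↑s
    _ ≤ ν (E ∩ ↑s) + ν (↑s)ᶜ :=
        add_le_add_right (measure_mono fun x hx => hx.2) _
    _ = ν (E ∩ ↑s) := by rw [hs, add_zero]
  have h2 : E ∩ ↑s = ⋃ z ∈ s, E ∩ {z} := by
    ext x; simp only [Set.mem_inter_iff, Set.mem_iUnion, Set.mem_singleton_iff, mem_coe]
    constructor
    · rintro ⟨hxE, hxs⟩; exact ⟨x, hxs, hxE, rfl⟩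
    · rintro ⟨z, hz, hxE, rfl⟩; exact ⟨hxE, hz⟩
  have h3 : ν (E ∩ ↑s) = ∑ z ∈ s, ν (E ∩ {z}) := by
    rw [h2]
    refine measure_biUnion_finset ?_ fun z _ => hE.inter (measurableSet_singleton z)
    intro a _ b _ hab
    refine Set.disjoint_left.2 fun x hxa hxb => hab ?_
    rw [← hxa.2, ← hxb.2]
  rw [Measure.coe_finset_sum, Finset.sum_apply, h1, h3]
  refine Finset.sum_congr rfl fun z _ => ?_
  rw [Measure.smul_apply, Measure.dirac_apply' z hE, smul_eq_mul]
  by_cases h : z ∈ E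
  · rw [Set.inter_eq_self_of_subset_right (Set.singleton_subset_iff.2 h)]
    simp [Set.indicator_apply, h]
  · have : E ∩ {z} = ∅ := by
      ext x; simp only [Set.mem_inter_iff, Set.mem_singleton_iff, Set.mem_empty_iff_false]
      exact iff_false_intro fun ⟨hxE, hxz⟩ => h (hxz ▸ hxE)
    simp [this, Set.indicator_apply, h]

lemma integral_sum_smul_dirac (s : Finset α) (wt : α → ENNReal) (hwt : ∀ z ∈ s, wt z ≠ ⊤)
    (f : α → ℝ) :
    ∫ y, f y ∂(∑ z ∈ s, wt z • Measure.dirac z) = ∑ z ∈ s, (wt z).toReal * f z := by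
  rw [integral_finset_sum_measure ?_]
  · refine Finset.sum_congr rfl fun z hz => ?_
    rw [integral_smul_measure, integral_dirac, smul_eq_mul]
  · intro z hz
    refine Integrable.smul_measure ⟨(aestronglyMeasurable_const).congr (ae_eq_dirac f).symm, ?_⟩
      (hwt z hz)
    simp [HasFiniteIntegral, lintegral_dirac]

end AuxMeasure

section AuxGrad

lemma pi_decomp (v : A → ℝ) : ∑ a, v a • (Pi.single a 1 : A → ℝ) = v := by
  funext b
  rw [Finset.sum_apply]
  simp [Pi.single_apply]

lemma grad_ineq (f : (A → ℝ) → ℝ) (cf : A → (A → ℝ) → ℝ) (U : Set (A → ℝ))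
    (hU : IsOpen U) (hsub : stdSimplex ℝ A ⊆ U) (hcd : ContDiffOn ℝ 1 f U)
    (hder : ∀ y ∈ stdSimplex ℝ A, ∀ a, fderiv ℝ f y (Pi.single a 1) = cf a y)
    (hcvx : ConvexOn ℝ (stdSimplex ℝ A) f) {x y : A → ℝ}
    (hx : x ∈ stdSimplex ℝ A) (hy : y ∈ stdSimplex ℝ A) :
    f x + ∑ a, (y a - x a) * cf a x ≤ f y := by
  have hdiff : DifferentiableAt ℝ f x :=
    (hcd.contDiffAt (hU.mem_nhds (hsub hx))).differentiableAt one_ne_zero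
  set d : A → ℝ := y - x with hd
  set L := fderiv ℝ f x with hL
  have hLd : L d = ∑ a, (y a - x a) * cf a x := by
    conv_lhs => rw [show d = ∑ a, d a • (Pi.single a 1 : A → ℝ) from (pi_decomp d).symm]
    rw [map_sum]
    refine Finset.sum_congr rfl fun a _ => ?_
    rw [_root_.map_smul, hL, hder x hx a]
    simp [hd, smul_eq_mul]
  have hc : HasDerivAt (fun t : ℝ => x + t • d) d 0 := by
    simpa using ((hasDerivAt_id (0:ℝ)).smul_const d).const_add x
  have hg : HasDerivAt (f ∘ fun t : ℝ => x + t • d) (L d) 0 := by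
    refine HasFDerivAt.comp_hasDerivAt 0 ?_ hc
    simpa using hdiff.hasFDerivAt
  have hbound : ∀ t ∈ Set.Ioc (0:ℝ) 1,
      slope (f ∘ fun t : ℝ => x + t • d) 0 t ≤ f y - f x := by
    intro t ht
    have hmem : x + t • d = (1 - t) • x + t • y := by
      funext a
      simp only [Pi.add_apply, Pi.smul_apply, smul_eq_mul, hd, Pi.sub_apply]
      ring
    have hle : f (x + t • d) ≤ (1 - t) * f x + t * f y := by
      rw [hmem]
      exact hcvx.2 hx hy (by linarith [ht.2]) (le_of_lt ht.1) (by ring)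
    have h0 : (f ∘ fun t : ℝ => x + t • d) 0 = f x := by simp
    have h1 : (f ∘ fun s : ℝ => x + s • d) t = f (x + t • d) := rfl
    rw [slope_def_field, h0, h1]
    rw [div_le_iff₀ (by linarith [ht.1] : (0:ℝ) < t - 0)]
    nlinarith [ht.1, ht.2]
  have htend : Filter.Tendsto (slope (f ∘ fun t : ℝ => x + t • d) 0)
      (nhdsWithin 0 (Set.Ioi 0)) (nhds (L d)) :=
    (hasDerivAt_iff_tendsto_slope.mp hg).mono_left
      (nhdsWithin_mono 0 (fun t ht => ne_of_gt ht))
  have hfin : L d ≤ f y - f x :=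
    le_of_tendsto htend
      (Filter.eventually_of_mem (Ioc_mem_nhdsGT_of_mem ⟨le_refl 0, one_pos⟩) hbound)
  linarith [hLd ▸ hfin]

end AuxGrad

section AuxBWE

lemma sum_comm3 {ι₁ ι₂ ι₃ M : Type*} [AddCommMonoid M] {s₁ : Finset ι₁} {s₂ : Finset ι₂}
    {s₃ : Finset ι₃} (f : ι₁ → ι₂ → ι₃ → M) :
    ∑ a ∈ s₁, ∑ b ∈ s₂, ∑ c ∈ s₃, f a b c = ∑ b ∈ s₂, ∑ c ∈ s₃, ∑ a ∈ s₁, f a b c := by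
  rw [Finset.sum_comm]
  exact Finset.sum_congr rfl fun b _ => Finset.sum_comm

lemma totalFlow_mem_stdSimplex (I : InfoStructure Θ) {yhat : ∀ k, I.T k → A → ℝ}
    (hy : IsInterim I yhat) (τ : ∀ k, I.T k) : totalFlow I yhat τ ∈ stdSimplex ℝ A := by
  refine ⟨fun a => Finset.sum_nonneg fun k _ => hy.1 k (τ k) a, ?_⟩
  show ∑ a, ∑ k, yhat k (τ k) a = 1
  rw [Finset.sum_comm, Finset.sum_congr rfl fun k _ => hy.2 k (τ k)]
  exact I.γ_sum

lemma sum_regroup (I : InfoStructure Θ) (k : I.K) (F : (∀ j, I.T j) → ℝ) :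
    ∑ τ, F τ = ∑ tk : I.T k, ∑ τ, if τ k = tk then F τ else 0 := by
  rw [Finset.sum_comm]
  refine Finset.sum_congr rfl fun τ _ => ?_
  rw [Finset.sum_ite_eq Finset.univ (τ k) (fun _ => F τ), if_pos (Finset.mem_univ _)]

lemma bwe_lhs_eq (I : InfoStructure Θ) (p : Θ → ℝ) (c : A → (A → ℝ) → Θ → ℝ)
    (yhat : ∀ k, I.T k → A → ℝ) (k : I.K) (tk : I.T k) (a b : A) :
    (∑ θ, ∑ τ : ∀ j, I.T j,
      if τ k = tk then
        p θ * I.π θ τ * (c a (totalFlow I yhat τ) θ - c b (totalFlow I yhat τ) θ)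
      else 0)
    = auxCost I p c yhat k tk a - auxCost I p c yhat k tk b := by
  unfold auxCost
  rw [← Finset.sum_sub_distrib]
  refine Finset.sum_congr rfl fun θ _ => ?_
  rw [← Finset.sum_sub_distrib]
  refine Finset.sum_congr rfl fun τ _ => ?_
  split_ifs <;> ring

lemma weight_eq_zero_of_typeProb (I : InfoStructure Θ) (p : Θ → ℝ) (hp_pos : ∀ θ, 0 < p θ)
    (k : I.K) (tk : I.T k) (h : ¬ 0 < typeProb I p k tk) :
    ∀ θ (τ : ∀ j, I.T j), τ k = tk → p θ * I.π θ τ = 0 := by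
  have hnn : ∀ θ (τ : ∀ j, I.T j), 0 ≤ (if τ k = tk then p θ * I.π θ τ else 0) := by
    intro θ τ
    split_ifs
    · exact mul_nonneg (hp_pos θ).le (I.π_nonneg θ τ)
    · exact le_refl 0
  have h0 : typeProb I p k tk = 0 :=
    le_antisymm (not_lt.1 h)
      (Finset.sum_nonneg fun θ _ => Finset.sum_nonneg fun τ _ => hnn θ τ)
  intro θ τ hτ
  have h1 := (Finset.sum_eq_zero_iff_of_nonneg
    (fun θ _ => Finset.sum_nonneg fun τ _ => hnn θ τ)).1 h0 θ (Finset.mem_univ θ)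
  have h2 := (Finset.sum_eq_zero_iff_of_nonneg (fun τ _ => hnn θ τ)).1 h1 τ (Finset.mem_univ τ)
  rwa [if_pos hτ] at h2

lemma auxCost_eq_zero (I : InfoStructure Θ) (p : Θ → ℝ) (c : A → (A → ℝ) → Θ → ℝ)
    (yhat : ∀ k, I.T k → A → ℝ) (k : I.K) (tk : I.T k)
    (h : ∀ θ (τ : ∀ j, I.T j), τ k = tk → p θ * I.π θ τ = 0) (a : A) :
    auxCost I p c yhat k tk a = 0 := by
  unfold auxCost
  refine Finset.sum_eq_zero fun θ _ => Finset.sum_eq_zero fun τ _ => ?_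
  split_ifs with hτ
  · rw [h θ τ hτ, zero_mul]
  · rfl

lemma sum_mul_auxCost_nonneg [Nonempty A] (I : InfoStructure Θ) (p : Θ → ℝ)
    (hp_pos : ∀ θ, 0 < p θ) (c : A → (A → ℝ) → Θ → ℝ)
    {yhat : ∀ k, I.T k → A → ℝ} (hy : IsBWEps I p c 0 yhat)
    {w' : ∀ k, I.T k → A → ℝ} (hw' : IsInterim I w') (k : I.K) (tk : I.T k) :
    0 ≤ ∑ a, (w' k tk a - yhat k tk a) * auxCost I p c yhat k tk a := by
  by_cases hP : 0 < typeProb I p k tk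
  · obtain ⟨b0, _, hb0⟩ := Finset.exists_min_image Finset.univ (auxCost I p c yhat k tk)
      ⟨Classical.arbitrary A, Finset.mem_univ _⟩
    have heq : ∀ a, 0 < yhat k tk a →
        auxCost I p c yhat k tk a = auxCost I p c yhat k tk b0 := by
      intro a ha
      refine le_antisymm ?_ (hb0 a (Finset.mem_univ a))
      have h2 := hy.2 k tk hP a b0 ha
      rw [bwe_lhs_eq, zero_mul] at h2
      linarith
    have hsum_y : ∑ a, yhat k tk a * auxCost I p c yhat k tk a
        = I.γ k * auxCost I p c yhat k tk b0 := by
      rw [← hy.1.2 k tk, Finset.sum_mul]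
      refine Finset.sum_congr rfl fun a _ => ?_
      rcases lt_or_eq_of_le (hy.1.1 k tk a) with hpos | hzero
      · rw [heq a hpos]
      · rw [← hzero, zero_mul, zero_mul]
    have hsum_w : I.γ k * auxCost I p c yhat k tk b0
        ≤ ∑ a, w' k tk a * auxCost I p c yhat k tk a := by
      rw [← hw'.2 k tk, Finset.sum_mul]
      exact Finset.sum_le_sum fun a _ =>
        mul_le_mul_of_nonneg_left (hb0 a (Finset.mem_univ a)) (hw'.1 k tk a)
    have hsplit : ∑ a, (w' k tk a - yhat k tk a) * auxCost I p c yhat k tk a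
        = (∑ a, w' k tk a * auxCost I p c yhat k tk a)
          - ∑ a, yhat k tk a * auxCost I p c yhat k tk a := by
      rw [← Finset.sum_sub_distrib]
      exact Finset.sum_congr rfl fun a _ => by ring
    rw [hsplit, hsum_y]
    linarith
  · have hz := weight_eq_zero_of_typeProb I p hp_pos k tk hP
    refine le_of_eq (Finset.sum_eq_zero fun a _ => ?_).symm
    rw [auxCost_eq_zero I p c yhat k tk hz a, mul_zero]

lemma bwe_potPi_le [Nonempty A] (I : InfoStructure Θ) (p : Θ → ℝ) (hp_pos : ∀ θ, 0 < p θ)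
    (c : A → (A → ℝ) → Θ → ℝ) (Φ : Θ → (A → ℝ) → ℝ) (hΦ : IsPotential c Φ)
    (hconv : ∀ θ, ConvexOn ℝ (stdSimplex ℝ A) (Φ θ))
    {yhat : ∀ k, I.T k → A → ℝ} (hy : IsBWEps I p c 0 yhat)
    {w' : ∀ k, I.T k → A → ℝ} (hw' : IsInterim I w') :
    potPi I p Φ yhat ≤ potPi I p Φ w' := by
  have hfS : ∀ τ, totalFlow I yhat τ ∈ stdSimplex ℝ A := totalFlow_mem_stdSimplex I hy.1
  have hfS' : ∀ τ, totalFlow I w' τ ∈ stdSimplex ℝ A := totalFlow_mem_stdSimplex I hw'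
  set E := ∑ θ, ∑ τ : ∀ k, I.T k, p θ * I.π θ τ *
      (∑ a, (totalFlow I w' τ a - totalFlow I yhat τ a) * c a (totalFlow I yhat τ) θ)
    with hE
  have key : ∀ θ (τ : ∀ k, I.T k),
      p θ * I.π θ τ * Φ θ (totalFlow I yhat τ) + p θ * I.π θ τ *
        (∑ a, (totalFlow I w' τ a - totalFlow I yhat τ a) * c a (totalFlow I yhat τ) θ)
      ≤ p θ * I.π θ τ * Φ θ (totalFlow I w' τ) := by
    intro θ τ
    obtain ⟨U, hU, hsub, hcd, hder⟩ := hΦ θ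
    have hgrad := grad_ineq (Φ θ) (fun a y => c a y θ) U hU hsub hcd hder (hconv θ)
      (hfS τ) (hfS' τ)
    have hnn : 0 ≤ p θ * I.π θ τ := mul_nonneg (hp_pos θ).le (I.π_nonneg θ τ)
    rw [← mul_add]
    exact mul_le_mul_of_nonneg_left hgrad hnn
  have main : potPi I p Φ yhat + E ≤ potPi I p Φ w' := by
    rw [potPi, hE, ← Finset.sum_add_distrib]
    rw [Finset.sum_congr rfl fun θ _ => (Finset.sum_add_distrib).symm]
    exact Finset.sum_le_sum fun θ _ => Finset.sum_le_sum fun τ _ => key θ τ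
  have hE_eq : E = ∑ k, ∑ tk : I.T k, ∑ a,
      (w' k tk a - yhat k tk a) * auxCost I p c yhat k tk a := by
    have e1 : E = ∑ θ, ∑ τ : ∀ k, I.T k, ∑ k, ∑ a,
        p θ * I.π θ τ * ((w' k (τ k) a - yhat k (τ k) a) * c a (totalFlow I yhat τ) θ) := by
      refine Finset.sum_congr rfl fun θ _ => Finset.sum_congr rfl fun τ _ => ?_
      have h5 : ∀ a, p θ * I.π θ τ *
          ((totalFlow I w' τ a - totalFlow I yhat τ a) * c a (totalFlow I yhat τ) θ)
          = ∑ k, p θ * I.π θ τ *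
              ((w' k (τ k) a - yhat k (τ k) a) * c a (totalFlow I yhat τ) θ) := by
        intro a
        rw [show totalFlow I w' τ a - totalFlow I yhat τ a
            = ∑ k, (w' k (τ k) a - yhat k (τ k) a) from (Finset.sum_sub_distrib _ _).symm,
          Finset.sum_mul, Finset.mul_sum]
      rw [Finset.mul_sum, Finset.sum_congr rfl fun a _ => h5 a]
      exact Finset.sum_comm
    have e2 : E = ∑ k, ∑ θ, ∑ τ : ∀ k, I.T k, ∑ a,
        p θ * I.π θ τ * ((w' k (τ k) a - yhat k (τ k) a) * c a (totalFlow I yhat τ) θ) := by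
      rw [e1, Finset.sum_congr rfl fun θ _ => Finset.sum_comm]
      exact Finset.sum_comm
    rw [e2]
    refine Finset.sum_congr rfl fun k _ => ?_
    have e3 : ∀ θ, ∑ τ : ∀ k, I.T k, ∑ a,
        p θ * I.π θ τ * ((w' k (τ k) a - yhat k (τ k) a) * c a (totalFlow I yhat τ) θ)
        = ∑ tk : I.T k, ∑ τ : ∀ k, I.T k, if τ k = tk then ∑ a,
          p θ * I.π θ τ * ((w' k (τ k) a - yhat k (τ k) a) * c a (totalFlow I yhat τ) θ)
          else 0 := by
      intro θ
      exact sum_regroup I k _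
    rw [Finset.sum_congr rfl fun θ _ => e3 θ, Finset.sum_comm]
    refine Finset.sum_congr rfl fun tk _ => ?_
    have e4 : ∀ a, (w' k tk a - yhat k tk a) * auxCost I p c yhat k tk a
        = ∑ θ, ∑ τ : ∀ k, I.T k, if τ k = tk then
            p θ * I.π θ τ * ((w' k tk a - yhat k tk a) * c a (totalFlow I yhat τ) θ)
          else 0 := by
      intro a
      rw [auxCost, Finset.mul_sum]
      refine Finset.sum_congr rfl fun θ _ => ?_
      rw [Finset.mul_sum]
      refine Finset.sum_congr rfl fun τ _ => ?_
      split_ifs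
      · ring
      · rw [mul_zero]
    rw [Finset.sum_congr rfl fun a _ => e4 a, sum_comm3]
    refine Finset.sum_congr rfl fun θ _ => Finset.sum_congr rfl fun τ _ => ?_
    split_ifs with hτ
    · rw [← hτ]
    · exact Finset.sum_const_zero.symm
  have hE_nonneg : 0 ≤ E := by
    rw [hE_eq]
    exact Finset.sum_nonneg fun k _ => Finset.sum_nonneg fun tk _ =>
      sum_mul_auxCost_nonneg I p hp_pos c hy hw' k tk
  linarith

end AuxBWE

section AuxUnique

lemma bwe_flows_eq [Nonempty A] (I : InfoStructure Θ) (p : Θ → ℝ) (hp_pos : ∀ θ, 0 < p θ)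
    (c : A → (A → ℝ) → Θ → ℝ) (Φ : Θ → (A → ℝ) → ℝ) (hΦ : IsPotential c Φ)
    (hconv : ∀ θ, StrictConvexOn ℝ (stdSimplex ℝ A) (Φ θ))
    {y1 y2 : ∀ k, I.T k → A → ℝ} (h1 : IsBWEps I p c 0 y1) (h2 : IsBWEps I p c 0 y2) :
    ∀ θ (τ : ∀ k, I.T k), 0 < I.π θ τ → totalFlow I y1 τ = totalFlow I y2 τ := by
  have hcvx : ∀ θ, ConvexOn ℝ (stdSimplex ℝ A) (Φ θ) := fun θ => (hconv θ).convexOn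
  have hVle := bwe_potPi_le I p hp_pos c Φ hΦ hcvx h1 h2.1
  have hVge := bwe_potPi_le I p hp_pos c Φ hΦ hcvx h2 h1.1
  set m : ∀ k, I.T k → A → ℝ := fun k tk a => (y1 k tk a + y2 k tk a) / 2 with hm
  have hmI : IsInterim I m := by
    refine ⟨fun k t a => ?_, fun k t => ?_⟩
    · have := h1.1.1 k t a
      have := h2.1.1 k t a
      simp only [hm]
      linarith
    · simp only [hm]
      rw [← Finset.sum_div, Finset.sum_add_distrib, h1.1.2 k t, h2.1.2 k t]
      ring
  have hmflow : ∀ (τ : ∀ k, I.T k) a,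
      totalFlow I m τ a = (totalFlow I y1 τ a + totalFlow I y2 τ a) / 2 := by
    intro τ a
    simp only [totalFlow, hm]
    rw [← Finset.sum_div, Finset.sum_add_distrib]
  have hmid : ∀ (τ : ∀ k, I.T k),
      (1/2 : ℝ) • totalFlow I y1 τ + (1/2 : ℝ) • totalFlow I y2 τ = totalFlow I m τ := by
    intro τ
    funext a
    simp only [Pi.add_apply, Pi.smul_apply, smul_eq_mul]
    rw [hmflow]
    ring
  set t : Θ → (∀ k, I.T k) → ℝ := fun θ τ => p θ * I.π θ τ *
      ((Φ θ (totalFlow I y1 τ) + Φ θ (totalFlow I y2 τ)) / 2 - Φ θ (totalFlow I m τ)) with ht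
  have ht_nonneg : ∀ θ τ, 0 ≤ t θ τ := by
    intro θ τ
    refine mul_nonneg (mul_nonneg (hp_pos θ).le (I.π_nonneg θ τ)) ?_
    have hle := (hcvx θ).2 (totalFlow_mem_stdSimplex I h1.1 τ) (totalFlow_mem_stdSimplex I h2.1 τ)
      (by norm_num : (0:ℝ) ≤ 1/2) (by norm_num : (0:ℝ) ≤ 1/2) (by norm_num)
    rw [hmid τ] at hle
    simp only [smul_eq_mul] at hle
    linarith
  have hsum_t : ∑ θ, ∑ τ, t θ τ
      = (potPi I p Φ y1 + potPi I p Φ y2) / 2 - potPi I p Φ m := by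
    rw [potPi, potPi, potPi, ← Finset.sum_add_distrib, Finset.sum_div, ← Finset.sum_sub_distrib]
    refine Finset.sum_congr rfl fun θ _ => ?_
    rw [← Finset.sum_add_distrib, Finset.sum_div, ← Finset.sum_sub_distrib]
    exact Finset.sum_congr rfl fun τ _ => by simp only [ht]; ring
  have hm_ge : potPi I p Φ y1 ≤ potPi I p Φ m :=
    bwe_potPi_le I p hp_pos c Φ hΦ hcvx h1 hmI
  have hV : potPi I p Φ y2 = potPi I p Φ y1 := le_antisymm hVge hVle
  have hsum_le : ∑ θ, ∑ τ, t θ τ ≤ 0 := by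
    rw [hsum_t, hV]
    linarith
  have hsum_zero : ∑ θ, ∑ τ, t θ τ = 0 :=
    le_antisymm hsum_le
      (Finset.sum_nonneg fun θ _ => Finset.sum_nonneg fun τ _ => ht_nonneg θ τ)
  have hzero : ∀ θ τ, t θ τ = 0 := by
    intro θ τ
    have hθ := (Finset.sum_eq_zero_iff_of_nonneg
      (fun θ _ => Finset.sum_nonneg fun τ _ => ht_nonneg θ τ)).1 hsum_zero θ (Finset.mem_univ θ)
    exact (Finset.sum_eq_zero_iff_of_nonneg (fun τ _ => ht_nonneg θ τ)).1 hθ τ (Finset.mem_univ τ)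
  intro θ τ hπ
  by_contra hne
  have hlt := (hconv θ).2 (totalFlow_mem_stdSimplex I h1.1 τ) (totalFlow_mem_stdSimplex I h2.1 τ)
    hne (by norm_num : (0:ℝ) < 1/2) (by norm_num : (0:ℝ) < 1/2) (by norm_num)
  rw [hmid τ] at hlt
  simp only [smul_eq_mul] at hlt
  have hpos : 0 < t θ τ := by
    refine mul_pos (mul_pos (hp_pos θ) hπ) ?_
    linarith
  exact absurd (hzero θ τ) (ne_of_gt hpos)

lemma outcome_eq_of_flows_eq (I : InfoStructure Θ) {y1 y2 : ∀ k, I.T k → A → ℝ}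
    (h : ∀ θ (τ : ∀ k, I.T k), 0 < I.π θ τ → totalFlow I y1 τ = totalFlow I y2 τ) (θ : Θ) :
    outcomeMeasure I y1 θ = outcomeMeasure I y2 θ := by
  unfold outcomeMeasure
  refine Finset.sum_congr rfl fun τ _ => ?_
  rcases lt_or_eq_of_le (I.π_nonneg θ τ) with hpos | hzero
  · rw [h θ τ hpos]
  · rw [← hzero]
    simp

end AuxUnique

/-- full implementation with strictly convex potential, exact version:
a BCWE with finite support and rational flows is implemented by a direct information
structure whose obedient profile is a Bayesian Wardrop equilibrium, whose obedient
outcome equals the BCWE, and whose Bayesian Wardrop equilibrium outcome is unique. -/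
theorem full_implementation_exact
    (p : Θ → ℝ) (hp_pos : ∀ θ, 0 < p θ) (hp_sum : ∑ θ, p θ = 1)
    (c : A → (A → ℝ) → Θ → ℝ)
    (hc : ∀ a θ, ContinuousOn (fun y => c a y θ) (stdSimplex ℝ A))
    (Φ : Θ → (A → ℝ) → ℝ) (hΦ : IsPotential c Φ)
    (hconv : ∀ θ, StrictConvexOn ℝ (stdSimplex ℝ A) (Φ θ))
    (μ : Θ → MeasureTheory.Measure (A → ℝ)) (hμ : IsBCWE p c μ)
    (S : Finset (A → ℝ))
    (hS_rat : ∀ y ∈ S, ∀ a, ∃ q : ℚ, y a = (q : ℝ))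
    (hS_supp : ∀ θ, μ θ ((↑S : Set (A → ℝ))ᶜ) = 0) :
    ∃ I : DirectInfoStructure A Θ,
      IsBWEps I.toInfo p c 0 I.obedient ∧
      (∀ θ, μ θ = outcomeMeasure I.toInfo I.obedient θ) ∧
      ∀ yhat : ∀ k, I.toInfo.T k → A → ℝ, IsBWEps I.toInfo p c 0 yhat →
        ∀ θ, outcomeMeasure I.toInfo yhat θ = outcomeMeasure I.toInfo I.obedient θ := by
  classical
  haveI hprob : ∀ θ, IsProbabilityMeasure (μ θ) := hμ.1.1
  have hΘ : Nonempty Θ := by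
    by_contra h
    rw [not_nonempty_iff] at h
    rw [Finset.univ_eq_empty, Finset.sum_empty] at hp_sum
    exact absurd hp_sum (by norm_num)
  obtain ⟨θ0⟩ := hΘ
  haveI hA : Nonempty A := by
    by_contra h
    rw [not_nonempty_iff] at h
    have h1 : stdSimplex ℝ A = ∅ := by
      ext y
      simp only [stdSimplex, Set.mem_setOf_eq, Set.mem_empty_iff_false, iff_false, not_and]
      intro _
      rw [Finset.univ_eq_empty, Finset.sum_empty]
      norm_num
    have h2 := hμ.1.2 θ0
    rw [h1, Set.compl_empty] at h2
    have h3 : μ θ0 Set.univ = 1 := measure_univ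
    rw [h2] at h3
    exact absurd h3 (by norm_num)
  -- the support, restricted to the simplex
  set S' : Finset (A → ℝ) := S.filter (fun z => z ∈ stdSimplex ℝ A) with hS'def
  have hS'_sub : ∀ z ∈ S', z ∈ stdSimplex ℝ A := fun z hz => (Finset.mem_filter.1 hz).2
  have hS'_S : ∀ z ∈ S', z ∈ S := fun z hz => (Finset.mem_filter.1 hz).1
  have hS'_null : ∀ θ, μ θ ((↑S' : Set (A → ℝ))ᶜ) = 0 := by
    intro θ
    have hsub : ((↑S' : Set (A → ℝ))ᶜ) ⊆ ((↑S : Set (A → ℝ))ᶜ) ∪ (stdSimplex ℝ A)ᶜ := by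
      intro x hx
      by_cases h1 : x ∈ S
      · by_cases h2 : x ∈ stdSimplex ℝ A
        · exact absurd (Finset.mem_coe.2 (Finset.mem_filter.2 ⟨h1, h2⟩)) hx
        · exact Or.inr h2
      · exact Or.inl fun hc => h1 (Finset.mem_coe.1 hc)
    exact measure_mono_null hsub (measure_union_null (hS_supp θ) (hμ.1.2 θ))
  have hrepr : ∀ θ, μ θ = ∑ z ∈ S', μ θ {z} • Measure.dirac z :=
    fun θ => measure_eq_sum_dirac (μ θ) S' (hS'_null θ)
  set w : Θ → (A → ℝ) → ℝ := fun θ z => (μ θ {z}).toReal with hwdef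
  have hw_nonneg : ∀ θ z, 0 ≤ w θ z := fun θ z => ENNReal.toReal_nonneg
  have hfin : ∀ θ (z : A → ℝ), μ θ {z} ≠ ⊤ := fun θ z => measure_ne_top _ _
  have hofReal : ∀ θ z, ENNReal.ofReal (w θ z) = μ θ {z} :=
    fun θ z => ENNReal.ofReal_toReal (hfin θ z)
  have hw_sum : ∀ θ, ∑ z ∈ S', w θ z = 1 := by
    intro θ
    have h1 : μ θ Set.univ = ∑ z ∈ S', μ θ {z} := by
      conv_lhs => rw [hrepr θ]
      rw [Measure.coe_finset_sum, Finset.sum_apply]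
      refine Finset.sum_congr rfl fun z _ => ?_
      rw [Measure.smul_apply, Measure.dirac_apply_of_mem (Set.mem_univ z), smul_eq_mul, mul_one]
    have h2 : (1 : ENNReal) = ∑ z ∈ S', μ θ {z} := by rw [← h1, measure_univ]
    have h3 := congrArg ENNReal.toReal h2
    rw [ENNReal.toReal_sum (fun z _ => hfin θ z)] at h3
    simpa using h3.symm
  have hint : ∀ θ (g : (A → ℝ) → ℝ), ∫ y, g y ∂(μ θ) = ∑ z ∈ S', w θ z * g z := by
    intro θ g
    conv_lhs => rw [hrepr θ]
    exact integral_sum_smul_dirac S' (fun z => μ θ {z}) (fun z _ => hfin θ z) g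
  -- rational denominators
  set q : (A → ℝ) → A → ℚ := fun z a => if h : ∃ q : ℚ, z a = (q : ℝ) then h.choose else 0
    with hqdef
  have hq_spec : ∀ z ∈ S', ∀ a, z a = (q z a : ℝ) := by
    intro z hz a
    have h := hS_rat z (hS'_S z hz) a
    simp only [hqdef, dif_pos h]
    exact h.choose_spec
  set N : ℕ := ∏ z ∈ S', ∏ a, (q z a).den with hNdef
  have hN_pos : 0 < N := Finset.prod_pos fun z _ => Finset.prod_pos fun a _ => (q z a).pos
  haveI : NeZero N := ⟨hN_pos.ne'⟩
  have hNR_pos : (0:ℝ) < (N:ℝ) := by exact_mod_cast hN_pos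
  have hden_dvd : ∀ z ∈ S', ∀ a, (q z a).den ∣ N := fun z hz a =>
    dvd_trans (Finset.dvd_prod_of_mem (fun a' => (q z a').den) (Finset.mem_univ a))
      (Finset.dvd_prod_of_mem (fun z' => ∏ a', (q z' a').den) hz)
  have hm_ex : ∀ z ∈ S', ∀ a, ∃ n : ℕ, (n : ℝ) = (N : ℝ) * z a := by
    intro z hz a
    obtain ⟨t, ht⟩ := hden_dvd z hz a
    have hq_nonneg : 0 ≤ q z a := by
      have h0 : (0:ℝ) ≤ (q z a : ℝ) := (hq_spec z hz a) ▸ (hS'_sub z hz).1 a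
      exact_mod_cast h0
    have hnum : (0:ℤ) ≤ (q z a).num := Rat.num_nonneg.2 hq_nonneg
    refine ⟨t * (q z a).num.toNat, ?_⟩
    have key : ((t * (q z a).num.toNat : ℕ) : ℚ) = (N : ℚ) * q z a := by
      push_cast [Int.toNat_of_nonneg hnum]
      rw [ht]
      push_cast
      rw [mul_comm ((q z a).den : ℚ) (t : ℚ), mul_assoc, mul_comm ((q z a).den : ℚ) (q z a),
        Rat.mul_den_eq_num]
      congr 1
      exact_mod_cast Int.toNat_of_nonneg hnum
    have key2 := congrArg (fun x : ℚ => (x : ℝ)) key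
    push_cast at key2
    rw [hq_spec z hz a]
    exact_mod_cast key2
  set m : (A → ℝ) → A → ℕ :=
    fun z a => if h : ∃ n : ℕ, (n : ℝ) = (N : ℝ) * z a then h.choose else 0 with hmdef
  have hm_spec : ∀ z ∈ S', ∀ a, (m z a : ℝ) = (N : ℝ) * z a := by
    intro z hz a
    have h := hm_ex z hz a
    simp only [hmdef, dif_pos h]
    exact h.choose_spec
  have hm_sum : ∀ z ∈ S', ∑ a, m z a = N := by
    intro z hz
    have h1 : ((∑ a, m z a : ℕ) : ℝ) = (N : ℝ) := by
      push_cast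
      rw [Finset.sum_congr rfl fun a _ => hm_spec z hz a, ← Finset.mul_sum,
        (hS'_sub z hz).2, mul_one]
    exact_mod_cast h1
  -- assignment maps
  set σ : (A → ℝ) → ZMod N → A := fun z k =>
    if h : Nonempty (ZMod N ≃ (Σ a : A, Fin (m z a))) then (h.some k).1
    else Classical.arbitrary A with hσdef
  have hσ_count : ∀ z ∈ S', ∀ a, ∑ k : ZMod N, (if σ z k = a then (1:ℝ) else 0) = (m z a : ℝ) := by
    intro z hz a
    have hcard : Fintype.card (ZMod N) = Fintype.card (Σ a : A, Fin (m z a)) := by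
      rw [ZMod.card, Fintype.card_sigma]
      simp only [Fintype.card_fin]
      exact (hm_sum z hz).symm
    have hne : Nonempty (ZMod N ≃ (Σ a : A, Fin (m z a))) := ⟨Fintype.equivOfCardEq hcard⟩
    simp only [hσdef, dif_pos hne]
    rw [Equiv.sum_comp hne.some (fun s : (Σ a : A, Fin (m z a)) => if s.1 = a then (1:ℝ) else 0)]
    rw [← Finset.univ_sigma_univ, Finset.sum_sigma]
    have hinner : ∀ a' : A, (∑ _i : Fin (m z a'), if a' = a then (1:ℝ) else 0)
        = if a' = a then ((m z a' : ℕ) : ℝ) else 0 := by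
      intro a'
      rw [Finset.sum_const, Finset.card_univ, Fintype.card_fin]
      split_ifs <;> simp
    rw [Finset.sum_congr rfl fun a' _ => hinner a',
      Finset.sum_ite_eq' Finset.univ a (fun a' => ((m z a' : ℕ) : ℝ)), if_pos (Finset.mem_univ a)]
  -- the direct information structure
  set πf : Θ → (ZMod N → A) → ℝ := fun θ τ =>
    ∑ z ∈ S', ∑ j : ZMod N, if τ = fun k => σ z (k + j) then w θ z / (N : ℝ) else 0 with hπfdef
  have hπ_nonneg : ∀ θ τ, 0 ≤ πf θ τ := by
    intro θ τ
    refine Finset.sum_nonneg fun z _ => Finset.sum_nonneg fun j _ => ?_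
    split_ifs
    · exact div_nonneg (hw_nonneg θ z) hNR_pos.le
    · exact le_refl 0
  have hπ_sum : ∀ θ, ∑ τ : ZMod N → A, πf θ τ = 1 := by
    intro θ
    rw [Finset.sum_comm]
    rw [Finset.sum_congr rfl fun z _ => Finset.sum_comm]
    have h1 : ∀ z ∈ S', ∀ j : ZMod N,
        (∑ τ : ZMod N → A, if τ = fun k => σ z (k + j) then w θ z / (N:ℝ) else 0)
        = w θ z / (N:ℝ) := by
      intro z _ j
      rw [Finset.sum_ite_eq' Finset.univ (fun k => σ z (k + j)) (fun _ => w θ z / (N:ℝ)),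
        if_pos (Finset.mem_univ _)]
    rw [Finset.sum_congr rfl fun z hz => Finset.sum_congr rfl fun j _ => h1 z hz j]
    rw [Finset.sum_congr rfl fun z _ => Finset.sum_const _]
    simp only [Finset.card_univ, ZMod.card, nsmul_eq_mul]
    rw [Finset.sum_congr rfl fun z _ => mul_div_cancel₀ (w θ z) hNR_pos.ne']
    exact hw_sum θ
  set Istr : DirectInfoStructure A Θ :=
    { K := ZMod N
      instFintypeK := inferInstance
      instDecEqK := inferInstance
      γ := fun _ => (N:ℝ)⁻¹
      γ_pos := fun _ => inv_pos.2 hNR_pos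
      γ_sum := by
        rw [Finset.sum_const, Finset.card_univ, ZMod.card, nsmul_eq_mul]
        field_simp
      π := πf
      π_nonneg := hπ_nonneg
      π_sum := hπ_sum } with hIstr
  have hflow : ∀ z ∈ S', ∀ j : ZMod N,
      totalFlow Istr.toInfo Istr.obedient (fun k : ZMod N => σ z (k + j)) = z := by
    intro z hz j
    funext a
    show (∑ k : ZMod N, if σ z (k + j) = a then (N:ℝ)⁻¹ else 0) = z a
    have h1 : (∑ k : ZMod N, if σ z (k + j) = a then (N:ℝ)⁻¹ else 0)
        = ∑ k : ZMod N, if σ z k = a then (N:ℝ)⁻¹ else 0 :=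
      Fintype.sum_equiv (Equiv.addRight j) _ _ (fun k => rfl)
    have h2 : (∑ k : ZMod N, if σ z k = a then (N:ℝ)⁻¹ else 0)
        = (N:ℝ)⁻¹ * (m z a : ℝ) := by
      rw [← hσ_count z hz a, Finset.mul_sum]
      refine Finset.sum_congr rfl fun k _ => ?_
      split_ifs <;> simp
    rw [h1, h2, hm_spec z hz a]
    field_simp
  have hobed : IsBWEps Istr.toInfo p c 0 Istr.obedient := by
    constructor
    · refine ⟨fun k t a => ?_, fun k t => ?_⟩
      · unfold DirectInfoStructure.obedient
        split_ifs
        · exact (Istr.γ_pos k).le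
        · exact le_refl 0
      · show (∑ a, if t = a then (N:ℝ)⁻¹ else 0) = (N:ℝ)⁻¹
        rw [Finset.sum_ite_eq Finset.univ t (fun _ => (N:ℝ)⁻¹), if_pos (Finset.mem_univ t)]
    · show ∀ (k : ZMod N) (tk : A), 0 < typeProb Istr.toInfo p k tk → ∀ a b : A,
          0 < Istr.obedient k tk a →
          (∑ θ, ∑ τ : ZMod N → A, if τ k = tk then p θ * Istr.toInfo.π θ τ *
              (c a (totalFlow Istr.toInfo Istr.obedient τ) θ
                - c b (totalFlow Istr.toInfo Istr.obedient τ) θ) else 0)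
            ≤ 0 * typeProb Istr.toInfo p k tk
      intro k tk hP a b ha
      have hka : tk = a := by
        by_contra hne
        have h0 : Istr.obedient k tk a = 0 := if_neg hne
        rw [h0] at ha
        exact lt_irrefl 0 ha
      subst hka
      rw [zero_mul]
      have hcollapse : ∀ θ,
          (∑ τ : ZMod N → A, if τ k = tk then p θ * Istr.toInfo.π θ τ *
              (c tk (totalFlow Istr.toInfo Istr.obedient τ) θ
                - c b (totalFlow Istr.toInfo Istr.obedient τ) θ) else 0)
          = ∑ z ∈ S', p θ * w θ z * z tk * (c tk z θ - c b z θ) := by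
        intro θ
        have h1 : ∀ τ : ZMod N → A,
            (if τ k = tk then p θ * Istr.toInfo.π θ τ *
              (c tk (totalFlow Istr.toInfo Istr.obedient τ) θ
                - c b (totalFlow Istr.toInfo Istr.obedient τ) θ) else 0)
            = ∑ z ∈ S', ∑ j : ZMod N,
                if τ = (fun k' : ZMod N => σ z (k' + j)) then
                  (if τ k = tk then p θ * (w θ z / (N:ℝ)) *
                    (c tk (totalFlow Istr.toInfo Istr.obedient τ) θ
                      - c b (totalFlow Istr.toInfo Istr.obedient τ) θ) else 0)
                else 0 := by
          intro τ
          by_cases h : τ k = tk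
          · rw [if_pos h]
            rw [show Istr.toInfo.π = πf from rfl, hπfdef]
            simp only [Finset.mul_sum, Finset.sum_mul, mul_ite, ite_mul, mul_zero, zero_mul,
              if_pos h]
          · rw [if_neg h]
            symm
            refine Finset.sum_eq_zero fun z _ => Finset.sum_eq_zero fun j _ => ?_
            rw [if_neg h, ite_self]
        rw [Finset.sum_congr rfl fun τ _ => h1 τ, sum_comm3]
        refine Finset.sum_congr rfl fun z hz => ?_
        have h2 : ∀ j : ZMod N,
            (∑ τ : ZMod N → A,
              if τ = (fun k' : ZMod N => σ z (k' + j)) then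
                (if τ k = tk then p θ * (w θ z / (N:ℝ)) *
                  (c tk (totalFlow Istr.toInfo Istr.obedient τ) θ
                    - c b (totalFlow Istr.toInfo Istr.obedient τ) θ) else 0)
              else 0)
            = (if σ z (k + j) = tk then (1:ℝ) else 0) *
                (p θ * (w θ z / (N:ℝ)) * (c tk z θ - c b z θ)) := by
          intro j
          rw [Finset.sum_ite_eq' Finset.univ (fun k' : ZMod N => σ z (k' + j)) _,
            if_pos (Finset.mem_univ _)]
          simp only [hflow z hz j]
          split_ifs with h
          · rw [one_mul]
          · rw [zero_mul]
        rw [Finset.sum_congr rfl fun j _ => h2 j, ← Finset.sum_mul]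
        have h3 : (∑ j : ZMod N, if σ z (k + j) = tk then (1:ℝ) else 0) = (m z tk : ℝ) := by
          rw [show (∑ j : ZMod N, if σ z (k + j) = tk then (1:ℝ) else 0)
              = ∑ j : ZMod N, if σ z j = tk then (1:ℝ) else 0 from
            Fintype.sum_equiv (Equiv.addLeft k) _ _ (fun j => rfl)]
          exact hσ_count z hz tk
        rw [h3, hm_spec z hz tk]
        field_simp
      have hgoal : (∑ θ, ∑ τ : ZMod N → A, if τ k = tk then p θ * Istr.toInfo.π θ τ *
            (c tk (totalFlow Istr.toInfo Istr.obedient τ) θ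
              - c b (totalFlow Istr.toInfo Istr.obedient τ) θ) else 0)
          = (∑ θ, p θ * ∫ y, y tk * c tk y θ ∂(μ θ))
            - ∑ θ, p θ * ∫ y, y tk * c b y θ ∂(μ θ) := by
        rw [← Finset.sum_sub_distrib]
        refine Finset.sum_congr rfl fun θ _ => ?_
        rw [hint θ (fun y => y tk * c tk y θ), hint θ (fun y => y tk * c b y θ)]
        rw [hcollapse θ]
        rw [Finset.mul_sum, Finset.mul_sum, ← Finset.sum_sub_distrib]
        exact Finset.sum_congr rfl fun z _ => by ring
      rw [hgoal]
      have hb := hμ.2 tk b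
      linarith
  refine ⟨Istr, hobed, ?_, ?_⟩
  · -- outcome equals μ
    intro θ
    refine Eq.symm ?_
    have hsplit : ∀ τ : ZMod N → A, ENNReal.ofReal (πf θ τ) •
        (Measure.dirac (totalFlow Istr.toInfo Istr.obedient τ) : Measure (A → ℝ))
        = ∑ z ∈ S', ∑ j : ZMod N,
          (if τ = fun k : ZMod N => σ z (k + j) then ENNReal.ofReal (w θ z / (N:ℝ)) else 0) •
            Measure.dirac (totalFlow Istr.toInfo Istr.obedient τ) := by
      intro τ
      have hnn : ∀ z ∈ S', ∀ j : ZMod N, (0:ℝ) ≤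
          (if τ = fun k : ZMod N => σ z (k + j) then w θ z / (N:ℝ) else 0) := by
        intro z _ j
        split_ifs
        · exact div_nonneg (hw_nonneg θ z) hNR_pos.le
        · exact le_refl 0
      simp only [hπfdef]
      rw [ENNReal.ofReal_sum_of_nonneg
        (fun z hz => Finset.sum_nonneg fun j _ => hnn z hz j), Finset.sum_smul]
      refine Finset.sum_congr rfl fun z hz => ?_
      rw [ENNReal.ofReal_sum_of_nonneg (fun j _ => hnn z hz j), Finset.sum_smul]
      refine Finset.sum_congr rfl fun j _ => ?_
      congr 1
      split_ifs
      · rfl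
      · exact ENNReal.ofReal_zero
    show (∑ τ : ZMod N → A, ENNReal.ofReal (πf θ τ) •
        (Measure.dirac (totalFlow Istr.toInfo Istr.obedient τ) : Measure (A → ℝ))) = μ θ
    rw [hrepr θ]
    rw [Finset.sum_congr rfl fun τ _ => hsplit τ, sum_comm3]
    refine Finset.sum_congr rfl fun z hz => ?_
    have hinner : ∀ j : ZMod N, (∑ τ : ZMod N → A,
        (if τ = fun k : ZMod N => σ z (k + j) then ENNReal.ofReal (w θ z / (N:ℝ)) else 0) •
          (Measure.dirac (totalFlow Istr.toInfo Istr.obedient τ) : Measure (A → ℝ)))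
        = ENNReal.ofReal (w θ z / (N:ℝ)) • Measure.dirac z := by
      intro j
      rw [Finset.sum_eq_single (fun k : ZMod N => σ z (k + j))]
      · rw [if_pos rfl, hflow z hz j]
      · intro τ _ hne
        rw [if_neg hne, zero_smul]
      · intro h
        exact absurd (Finset.mem_univ _) h
    rw [Finset.sum_congr rfl fun j _ => hinner j, Finset.sum_const, Finset.card_univ, ZMod.card]
    rw [← Nat.cast_smul_eq_nsmul ENNReal N, smul_smul]
    rw [← hofReal θ z]
    congr 1
    rw [← ENNReal.ofReal_natCast N, ← ENNReal.ofReal_mul (by positivity)]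
    congr 1
    field_simp
  · -- uniqueness
    intro yhat hyhat θ
    exact outcome_eq_of_flows_eq Istr.toInfo
      (bwe_flows_eq Istr.toInfo p hp_pos c Φ hΦ hconv hyhat hobed) θ

end NonatomicGames
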